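/- Let X be a topological space and (Y, ρ) a metric space. Let U_{ℵ₀}(X,Y) be the set of continuous f : X → Y such that for every ε > 0 there exists a countable cover of X by clopen sets on each of which the oscillation of f is at most ε. Then U_{ℵ₀}(X,Y) is closed under uniform limits: if f : X → Y is continuous and for every ε > 0 there exists g ∈ U_{ℵ₀}(X,Y) with ρ(f(x), g(x)) < ε for all x ∈ X, then f ∈ U_{ℵ₀}(X,Y). -/
import Mathlib


open Set

/-- `f ∈ U_{ℵ₀}(X,Y)`: `f` is continuous and for every `ε > 0` there is a countable
clopen cover of `X` on each member of which the oscillation of `f` is at most `ε`. -/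
def MemUCountable {X Y : Type*} [TopologicalSpace X] [MetricSpace Y] (f : X → Y) : Prop :=
  Continuous f ∧ ∀ ε : ℝ, 0 < ε → ∃ 𝒜 : Set (Set X), 𝒜.Countable ∧ ⋃₀ 𝒜 = Set.univ ∧
    ∀ A ∈ 𝒜, IsClopen A ∧ ∀ x ∈ A, ∀ y ∈ A, dist (f x) (f y) ≤ ε

theorem stmt2 {X Y : Type*} [TopologicalSpace X] [MetricSpace Y] (f : X → Y)
    (hf : Continuous f)
    (h : ∀ ε : ℝ, 0 < ε → ∃ g : X → Y, MemUCountable g ∧ ∀ x : X, dist (f x) (g x) < ε) :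
    MemUCountable f := by
  refine ⟨hf, fun ε hε => ?_⟩
  obtain ⟨g, ⟨-, hg⟩, hfg⟩ := h (ε / 4) (by linarith)
  obtain ⟨𝒜, hc, hcov, hA⟩ := hg (ε / 2) (by linarith)
  refine ⟨𝒜, hc, hcov, fun A hAmem => ⟨(hA A hAmem).1, fun x hx y hy => ?_⟩⟩
  have h1 := (hA A hAmem).2 x hx y hy
  have h2 := hfg x
  have h3 := hfg y
  calc dist (f x) (f y) ≤ dist (f x) (g x) + dist (g x) (g y) + dist (g y) (f y) :=
        dist_triangle4 _ _ _ _
    _ ≤ ε := by rw [dist_comm (g y) (f y)]; linarith
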